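/- Let N ≥ 1, let w ∈ ℂ^N be nonzero, let a ∈ ℂ^N, and let ε ≥ 0. If |w^H a| ≥ ε‖w‖₂, then the minimum of |w^H (a + δ)| over all δ ∈ ℂ^N with ‖δ‖₂ ≤ ε equals |w^H a| − ε‖w‖₂, and this minimum is attained at δ = −(w/‖w‖₂) · ε · exp(j·arg(w^H a)). -/

import Mathlib

/-- For nonzero `w`, any `a` and `ε ≥ 0` with `|w^H a| ≥ ε‖w‖₂`,
the minimum of `|w^H (a + δ)|` over `‖δ‖₂ ≤ ε` equals `|w^H a| − ε‖w‖₂`,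
attained at `δ = −(w/‖w‖₂)·ε·exp(j·arg(w^H a))`. -/
theorem rab_worst_case_min (N : ℕ) (hN : 1 ≤ N)
    (w a : EuclideanSpace ℂ (Fin N)) (hw : w ≠ 0) (ε : ℝ) (hε : 0 ≤ ε)
    (h : ε * ‖w‖ ≤ ‖(inner ℂ w a : ℂ)‖) :
    IsLeast {r : ℝ | ∃ δ : EuclideanSpace ℂ (Fin N), ‖δ‖ ≤ ε ∧
        r = ‖(inner ℂ w (a + δ) : ℂ)‖}
      (‖(inner ℂ w a : ℂ)‖ - ε * ‖w‖) ∧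
    ‖((-(ε / ‖w‖ : ℝ) : ℂ) * Complex.exp (((inner ℂ w a : ℂ).arg : ℂ) * Complex.I)) • w‖ ≤ ε ∧
    ‖(inner ℂ w
        (a + ((-(ε / ‖w‖ : ℝ) : ℂ) * Complex.exp (((inner ℂ w a : ℂ).arg : ℂ) * Complex.I)) • w) : ℂ)‖
      = ‖(inner ℂ w a : ℂ)‖ - ε * ‖w‖ := by
  have hwn : (0 : ℝ) < ‖w‖ := norm_pos_iff.mpr hw
  set c : ℂ := inner ℂ w a with hc
  set s : ℂ := (-(ε / ‖w‖ : ℝ) : ℂ) * Complex.exp ((c.arg : ℂ) * Complex.I) with hs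
  have habs_exp : ‖Complex.exp ((c.arg : ℂ) * Complex.I)‖ = 1 :=
    Complex.norm_exp_ofReal_mul_I _
  have hnorm : ‖s • w‖ = ε := by
    have hns : ‖s‖ = ε / ‖w‖ := by
      rw [hs, norm_mul, habs_exp, mul_one,
        norm_neg, Complex.norm_real, Real.norm_eq_abs, abs_of_nonneg (div_nonneg hε hwn.le)]
    rw [norm_smul, hns]
    field_simp
  have hinner : (inner ℂ w (a + s • w) : ℂ) = c - (ε * ‖w‖ : ℝ) * Complex.exp ((c.arg : ℂ) * Complex.I) := by
    rw [inner_add_right, inner_smul_right, ← hc]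
    have : (inner ℂ w w : ℂ) = (‖w‖^2 : ℝ) := by
      rw [inner_self_eq_norm_sq_to_K]; norm_num
    rw [this, hs]
    have hw0 : (‖w‖ : ℂ) ≠ 0 := by exact_mod_cast hwn.ne'
    push_cast
    field_simp
    ring
  have hval : ‖(inner ℂ w (a + s • w) : ℂ)‖ = ‖c‖ - ε * ‖w‖ := by
    rw [hinner]
    have hca : (‖c‖ : ℂ) * Complex.exp ((c.arg : ℂ) * Complex.I) = c :=
      Complex.norm_mul_exp_arg_mul_I c
    have : c - (ε * ‖w‖ : ℝ) * Complex.exp ((c.arg : ℂ) * Complex.I)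
        = ((‖c‖ - ε * ‖w‖ : ℝ) : ℂ) * Complex.exp ((c.arg : ℂ) * Complex.I) := by
      rw [Complex.ofReal_sub, sub_mul, hca, Complex.ofReal_mul]
    rw [this, norm_mul, habs_exp, mul_one, Complex.norm_real, Real.norm_eq_abs,
      abs_of_nonneg (by linarith)]
  refine ⟨⟨⟨s • w, hnorm.le, hval.symm⟩, ?_⟩, hnorm.le, hval⟩
  rintro r ⟨δ, hδ, rfl⟩
  have h1 : ‖(inner ℂ w δ : ℂ)‖ ≤ ε * ‖w‖ := by
    calc ‖(inner ℂ w δ : ℂ)‖ ≤ ‖w‖ * ‖δ‖ := by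
          exact norm_inner_le_norm w δ
    _ ≤ ‖w‖ * ε := by nlinarith
    _ = ε * ‖w‖ := mul_comm _ _
  have h2 : ‖c‖ ≤ ‖(inner ℂ w (a + δ) : ℂ)‖ + ‖(inner ℂ w δ : ℂ)‖ := by
    have : c = (inner ℂ w (a + δ) : ℂ) - inner ℂ w δ := by rw [inner_add_right, hc]; ring
    rw [this]
    exact norm_sub_le _ _
  linarith
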